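/- Let k, r ≥ 2 be integers, α ∈ {0,1}, with k dividing r in case α = 0, and let m = (1-α)·r/k. Suppose R_0, R_1, R_2 ∈ ℂ[t] satisfy the polynomial identity t·(1-t)^m·R_0(t)·R_2(t)^r = 1 - (1-t)^α·R_1(t)^k. Then for any λ ∈ ℂ* and any point (x,y,z) ∈ ℂ³ with x^r·y = z^k - 1, the point (λ·x·z^{1-α}·R_2(1-z^k), λ^{-r}·y·R_0(1-z^k), z^α·R_1(1-z^k)) also satisfies the equation X^r·Y = Z^k - 1. -/

import Mathlib

open Polynomial

theorem eta_tilde_preserves_surface (k r : ℕ) (hk : 2 ≤ k) (hr : 2 ≤ r)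
    (α : ℕ) (hα : α ≤ 1) (hkr : α = 0 → k ∣ r)
    (R₀ R₁ R₂ : ℂ[X])
    (hrel : X * (1 - X) ^ ((1 - α) * r / k) * R₀ * R₂ ^ r = 1 - (1 - X) ^ α * R₁ ^ k)
    (lam : ℂ) (hlam : lam ≠ 0) (x y z : ℂ) (h : x ^ r * y = z ^ k - 1) :
    (lam * x * z ^ (1 - α) * R₂.eval (1 - z ^ k)) ^ r *
      (lam ^ (-(r : ℤ)) * y * R₀.eval (1 - z ^ k)) =
    (z ^ α * R₁.eval (1 - z ^ k)) ^ k - 1 := by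
  have heval := congrArg (eval (1 - z ^ k)) hrel
  simp only [eval_mul, eval_pow, eval_sub, eval_one, eval_X] at heval
  have hlampow : lam ^ r * lam ^ (-(r : ℤ)) = 1 := by
    rw [← zpow_natCast lam r, ← zpow_add₀ hlam]
    simp
  interval_cases α
  · -- α = 0
    obtain ⟨m, hm⟩ := hkr rfl
    have hk0 : k ≠ 0 := by omega
    have hdiv : (1 - 0) * r / k = m := by
      rw [hm]; simp only [Nat.sub_zero, one_mul]; exact Nat.mul_div_cancel_left m (Nat.pos_of_ne_zero hk0)
    have h1 : (1 - (1 - z ^ k)) ^ m = z ^ r := by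
      have : 1 - (1 - z ^ k) = z ^ k := by ring
      rw [this, ← pow_mul, ← hm]
    rw [hdiv, h1] at heval
    simp only [Nat.sub_zero, pow_one, pow_zero, one_mul] at heval ⊢
    calc (lam * x * z * R₂.eval (1 - z ^ k)) ^ r *
          (lam ^ (-(r : ℤ)) * y * R₀.eval (1 - z ^ k))
        = (lam ^ r * lam ^ (-(r : ℤ))) * ((x ^ r * y) *
            (z ^ r * (R₀.eval (1 - z ^ k) * R₂.eval (1 - z ^ k) ^ r))) := by
          rw [mul_pow, mul_pow, mul_pow]; ring
      _ = (z ^ k - 1) * (z ^ r * (R₀.eval (1 - z ^ k) * R₂.eval (1 - z ^ k) ^ r)) := by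
          rw [hlampow, h]; ring
      _ = R₁.eval (1 - z ^ k) ^ k - 1 := by linear_combination -heval
  · -- α = 1
    simp only [Nat.sub_self, pow_zero, mul_one, one_mul, Nat.zero_mul, Nat.zero_div,
      pow_one] at heval ⊢
    calc (lam * x * R₂.eval (1 - z ^ k)) ^ r * (lam ^ (-(r : ℤ)) * y * R₀.eval (1 - z ^ k))
        = (lam ^ r * lam ^ (-(r : ℤ))) * ((x ^ r * y) * (R₀.eval (1 - z ^ k) * R₂.eval (1 - z ^ k) ^ r)) := by
          rw [mul_pow, mul_pow]; ring
      _ = (z ^ k - 1) * (R₀.eval (1 - z ^ k) * R₂.eval (1 - z ^ k) ^ r) := by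
          rw [hlampow, h]; ring
      _ = (z * R₁.eval (1 - z ^ k)) ^ k - 1 := by
          rw [mul_pow]; linear_combination -heval
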